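/- Let c₀ ∈ ℝ and c₁, c₂, c₃, A₁, A₂ > 0, and let γ be a real number with 2 ≤ γ ≤ 4. Then the function f(z) = c₀ + c₁/z + c₂·(z−1)/log(1 + A₁·z^(1−γ/2)) + c₃/(z·log(1 + A₂/z)) is strictly convex on (0,∞). -/

import Mathlib

open Set Filter

private lemma deriv2_eq_aux {f g g2 : ℝ → ℝ} {x : ℝ}
    (Hf : ∀ y ∈ Set.Ioi (0:ℝ), HasDerivAt f (g y) y)
    (hx : x ∈ Set.Ioi (0:ℝ))
    (Hg : HasDerivAt g (g2 x) x) :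
    deriv^[2] f x = g2 x := by
  have hev : deriv f =ᶠ[nhds x] g :=
    Filter.eventuallyEq_of_mem (Ioi_mem_nhds hx) fun y hy => (Hf y hy).deriv
  have h1 : deriv (deriv f) x = deriv g x := hev.deriv_eq
  simp only [Function.iterate_succ, Function.iterate_zero, Function.comp_apply, id_eq]
  rw [h1, Hg.deriv]

private lemma convexOn_Ioi_of_deriv2_aux {f g g2 : ℝ → ℝ}
    (Hf : ∀ y ∈ Set.Ioi (0:ℝ), HasDerivAt f (g y) y)
    (Hg : ∀ y ∈ Set.Ioi (0:ℝ), HasDerivAt g (g2 y) y)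
    (H0 : ∀ y ∈ Set.Ioi (0:ℝ), 0 ≤ g2 y) :
    ConvexOn ℝ (Set.Ioi (0:ℝ)) f := by
  apply convexOn_of_deriv2_nonneg (convex_Ioi 0)
  · exact fun x hx => (Hf x hx).continuousAt.continuousWithinAt
  · rw [interior_Ioi]
    exact fun x hx => (Hf x hx).differentiableAt.differentiableWithinAt
  · rw [interior_Ioi]
    intro x hx
    have hev : deriv f =ᶠ[nhds x] g :=
      Filter.eventuallyEq_of_mem (Ioi_mem_nhds hx) fun y hy => (Hf y hy).deriv
    exact (hev.differentiableAt_iff.mpr (Hg x hx).differentiableAt).differentiableWithinAt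
  · rw [interior_Ioi]
    intro x hx
    rw [deriv2_eq_aux Hf hx (Hg x hx)]
    exact H0 x hx

private lemma strictConvexOn_Ioi_of_deriv2_aux {f g g2 : ℝ → ℝ}
    (Hf : ∀ y ∈ Set.Ioi (0:ℝ), HasDerivAt f (g y) y)
    (Hg : ∀ y ∈ Set.Ioi (0:ℝ), HasDerivAt g (g2 y) y)
    (H0 : ∀ y ∈ Set.Ioi (0:ℝ), 0 < g2 y) :
    StrictConvexOn ℝ (Set.Ioi (0:ℝ)) f := by
  apply strictConvexOn_of_deriv2_pos (convex_Ioi 0)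
    (fun x hx => (Hf x hx).continuousAt.continuousWithinAt)
  rw [interior_Ioi]
  intro x hx
  rw [deriv2_eq_aux Hf hx (Hg x hx)]
  exact H0 x hx

private lemma log_lb_aux {s : ℝ} (hs : 0 ≤ s) : 2 * s ≤ (2 + s) * Real.log (1 + s) := by
  set F : ℝ → ℝ := fun t => (2 + t) * Real.log (1 + t) - 2 * t with hF
  have key : MonotoneOn F (Set.Ici (0:ℝ)) := by
    apply monotoneOn_of_deriv_nonneg (convex_Ici 0)
    · apply ContinuousOn.sub
      · apply ContinuousOn.mul (by fun_prop)
        apply ContinuousOn.log (by fun_prop)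
        intro t ht
        simp only [mem_Ici] at ht
        nlinarith
      · fun_prop
    · rw [interior_Ici]
      intro t ht
      simp only [mem_Ioi] at ht
      have h1 : (0:ℝ) < 1 + t := by linarith
      have hd : HasDerivAt F (1 * Real.log (1 + t) + (2 + t) * (1 / (1 + t)) - 2 * 1) t := by
        exact ((((hasDerivAt_id t).const_add 2).mul
          (((hasDerivAt_id t).const_add 1).log h1.ne')).sub ((hasDerivAt_id t).const_mul 2))
      exact hd.differentiableAt.differentiableWithinAt
    · rw [interior_Ici]
      intro t ht
      simp only [mem_Ioi] at ht
      have h1 : (0:ℝ) < 1 + t := by linarith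
      have hd : HasDerivAt F (1 * Real.log (1 + t) + (2 + t) * (1 / (1 + t)) - 2 * 1) t := by
        exact ((((hasDerivAt_id t).const_add 2).mul
          (((hasDerivAt_id t).const_add 1).log h1.ne')).sub ((hasDerivAt_id t).const_mul 2))
      rw [hd.deriv]
      have hlog : 1 - (1 + t)⁻¹ ≤ Real.log (1 + t) := by
        have := Real.log_le_sub_one_of_pos (show (0:ℝ) < (1 + t)⁻¹ by positivity)
        rw [Real.log_inv] at this
        linarith
      have heq : (2 + t) * (1 / (1 + t)) = 1 + (1 + t)⁻¹ := by
        field_simp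
        ring
      rw [heq]
      linarith
  have h0 : F 0 ≤ F s := key (self_mem_Ici) hs hs
  simp only [hF] at h0
  norm_num at h0
  linarith

private lemma term2_convex_aux (c₂ A₁ α : ℝ) (hc₂ : c₂ > 0) (hA₁ : A₁ > 0)
    (hα₁ : -1 ≤ α) (hα₀ : α ≤ 0) :
    ConvexOn ℝ (Set.Ioi (0:ℝ))
      (fun z : ℝ => c₂ * (z - 1) / Real.log (1 + A₁ * z ^ α)) := by
  apply convexOn_Ioi_of_deriv2_aux
    (g := fun z => c₂ * (Real.log (1 + A₁ * z ^ α)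
        - (z - 1) * (α * (A₁ * z ^ α) / (z * (1 + A₁ * z ^ α))))
      / (Real.log (1 + A₁ * z ^ α)) ^ 2)
    (g2 := fun z => c₂ * (-α) * (A₁ * z ^ α) *
        (2 * z * (1 + A₁ * z ^ α) * Real.log (1 + A₁ * z ^ α)
          - (z - 1) * (Real.log (1 + A₁ * z ^ α) * (1 + A₁ * z ^ α - α)
            + 2 * α * (A₁ * z ^ α)))
      / (z ^ 2 * (1 + A₁ * z ^ α) ^ 2 * (Real.log (1 + A₁ * z ^ α)) ^ 3))
  · intro x hx
    have hx0 : (0:ℝ) < x := hx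
    have hrp : (0:ℝ) < x ^ α := Real.rpow_pos_of_pos hx0 α
    have hS : (0:ℝ) < A₁ * x ^ α := by positivity
    have h1S : (0:ℝ) < 1 + A₁ * x ^ α := by linarith
    have hL : (0:ℝ) < Real.log (1 + A₁ * x ^ α) := Real.log_pos (by linarith)
    have hr : HasDerivAt (fun z : ℝ => z ^ α) (α * x ^ (α - 1)) x :=
      Real.hasDerivAt_rpow_const (Or.inl hx0.ne')
    have hV : HasDerivAt (fun z : ℝ => Real.log (1 + A₁ * z ^ α))
        (A₁ * (α * x ^ (α - 1)) / (1 + A₁ * x ^ α)) x :=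
      ((hr.const_mul A₁).const_add 1).log h1S.ne'
    have h := (((hasDerivAt_id x).sub_const 1).const_mul c₂).div hV hL.ne'
    refine h.congr_deriv (Eq.symm ?_)
    simp only [id, Pi.pow_apply, Pi.sub_apply, Pi.mul_apply]
    rw [Real.rpow_sub hx0 α 1, Real.rpow_one]
    rw [div_eq_div_iff (by positivity) (by positivity)]
    field_simp
  · intro x hx
    have hx0 : (0:ℝ) < x := hx
    have hrp : (0:ℝ) < x ^ α := Real.rpow_pos_of_pos hx0 α
    have hS : (0:ℝ) < A₁ * x ^ α := by positivity
    have h1S : (0:ℝ) < 1 + A₁ * x ^ α := by linarith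
    have hL : (0:ℝ) < Real.log (1 + A₁ * x ^ α) := Real.log_pos (by linarith)
    have hr : HasDerivAt (fun z : ℝ => z ^ α) (α * x ^ (α - 1)) x :=
      Real.hasDerivAt_rpow_const (Or.inl hx0.ne')
    have hs' : HasDerivAt (fun z : ℝ => A₁ * z ^ α) (A₁ * (α * x ^ (α - 1))) x :=
      hr.const_mul A₁
    have h1s : HasDerivAt (fun z : ℝ => 1 + A₁ * z ^ α) (A₁ * (α * x ^ (α - 1))) x :=
      hs'.const_add 1
    have hV : HasDerivAt (fun z : ℝ => Real.log (1 + A₁ * z ^ α))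
        (A₁ * (α * x ^ (α - 1)) / (1 + A₁ * x ^ α)) x := h1s.log h1S.ne'
    have hden' : HasDerivAt (fun z : ℝ => z * (1 + A₁ * z ^ α))
        (1 * (1 + A₁ * x ^ α) + x * (A₁ * (α * x ^ (α - 1)))) x :=
      (hasDerivAt_id x).mul h1s
    have hq : HasDerivAt (fun z : ℝ => α * (A₁ * z ^ α) / (z * (1 + A₁ * z ^ α)))
        ((α * (A₁ * (α * x ^ (α - 1))) * (x * (1 + A₁ * x ^ α))
          - α * (A₁ * x ^ α) * (1 * (1 + A₁ * x ^ α) + x * (A₁ * (α * x ^ (α - 1)))))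
          / (x * (1 + A₁ * x ^ α)) ^ 2) x :=
      (hs'.const_mul α).div hden' (by positivity)
    have hm := ((hasDerivAt_id x).sub_const 1).mul hq
    have hnum := (hV.sub hm).const_mul c₂
    have hdenom := hV.pow 2
    have h := hnum.div hdenom (by simp only [Pi.pow_apply]; positivity)
    refine h.congr_deriv (Eq.symm ?_)
    simp only [id, Pi.pow_apply, Pi.sub_apply, Pi.mul_apply]
    rw [Real.rpow_sub hx0 α 1, Real.rpow_one]
    rw [div_eq_div_iff (by positivity) (by positivity)]
    field_simp
    ring
  · intro x hx
    have hx0 : (0:ℝ) < x := hx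
    have hrp : (0:ℝ) < x ^ α := Real.rpow_pos_of_pos hx0 α
    set S := A₁ * x ^ α with hS_def
    have hS : (0:ℝ) < S := by positivity
    have h1S : (0:ℝ) < 1 + S := by linarith
    set L := Real.log (1 + S) with hL_def
    have hL : (0:ℝ) < L := Real.log_pos (by linarith)
    have hLs : L ≤ S := by
      have := Real.log_le_sub_one_of_pos h1S
      linarith
    have hkey : 2 * S ≤ (2 + S) * L := log_lb_aux hS.le
    have hG : 0 ≤ 2 * x * (1 + S) * L - (x - 1) * (L * (1 + S - α) + 2 * α * S) := by
      have h1 : α * (x - 1) ≤ x + 1 := by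
        nlinarith [mul_nonneg hx0.le (show (0:ℝ) ≤ 1 - α by linarith)]
      have h4 : (x + 1) * (L - 2 * S) ≤ (α * (x - 1)) * (L - 2 * S) :=
        mul_le_mul_of_nonpos_right h1 (by linarith)
      have h5 : 0 ≤ (x + 1) * ((2 + S) * L - 2 * S) :=
        mul_nonneg (by linarith) (by linarith)
      nlinarith [h4, h5]
    apply div_nonneg _ (by positivity)
    exact mul_nonneg (mul_nonneg (mul_nonneg hc₂.le (by linarith)) hS.le) hG

private lemma term3_convex_aux (c₃ A₂ : ℝ) (hc₃ : c₃ > 0) (hA₂ : A₂ > 0) :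
    ConvexOn ℝ (Set.Ioi (0:ℝ)) (fun z : ℝ => c₃ / (z * Real.log (1 + A₂ / z))) := by
  apply convexOn_Ioi_of_deriv2_aux
    (g := fun z => -c₃ * (Real.log (1 + A₂ / z) - A₂ / (z + A₂)) /
      (z * Real.log (1 + A₂ / z)) ^ 2)
    (g2 := fun z => c₃ * (2 * (Real.log (1 + A₂ / z) - A₂ / (z + A₂)) ^ 2
      + Real.log (1 + A₂ / z) * A₂ ^ 2 / (z + A₂) ^ 2) / (z * Real.log (1 + A₂ / z)) ^ 3)
  · intro x hx
    have hx0 : (0:ℝ) < x := hx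
    have h1p : (0:ℝ) < 1 + A₂ / x := by positivity
    have hM : 0 < Real.log (1 + A₂ / x) := Real.log_pos (by nlinarith [div_pos hA₂ hx0])
    have hinv : HasDerivAt (fun z : ℝ => A₂ / z) ((0 * x - A₂ * 1) / x ^ 2) x :=
      (hasDerivAt_const x A₂).div (hasDerivAt_id x) hx0.ne'
    have hlogM : HasDerivAt (fun z : ℝ => Real.log (1 + A₂ / z))
        ((0 * x - A₂ * 1) / x ^ 2 / (1 + A₂ / x)) x :=
      (hinv.const_add 1).log h1p.ne'
    have hu : HasDerivAt (fun z : ℝ => z * Real.log (1 + A₂ / z))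
        (1 * Real.log (1 + A₂ / x) + x * ((0 * x - A₂ * 1) / x ^ 2 / (1 + A₂ / x))) x :=
      (hasDerivAt_id x).mul hlogM
    have hu0 : x * Real.log (1 + A₂ / x) ≠ 0 := by positivity
    have h := (hasDerivAt_const x c₃).div hu hu0
    refine h.congr_deriv (Eq.symm ?_)
    rw [div_eq_div_iff (by positivity) (by positivity)]
    field_simp
    ring
  · intro x hx
    have hx0 : (0:ℝ) < x := hx
    have h1p : (0:ℝ) < 1 + A₂ / x := by positivity
    have hM : 0 < Real.log (1 + A₂ / x) := Real.log_pos (by nlinarith [div_pos hA₂ hx0])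
    have hinv : HasDerivAt (fun z : ℝ => A₂ / z) ((0 * x - A₂ * 1) / x ^ 2) x :=
      (hasDerivAt_const x A₂).div (hasDerivAt_id x) hx0.ne'
    have hlogM : HasDerivAt (fun z : ℝ => Real.log (1 + A₂ / z))
        ((0 * x - A₂ * 1) / x ^ 2 / (1 + A₂ / x)) x :=
      (hinv.const_add 1).log h1p.ne'
    have hu : HasDerivAt (fun z : ℝ => z * Real.log (1 + A₂ / z))
        (1 * Real.log (1 + A₂ / x) + x * ((0 * x - A₂ * 1) / x ^ 2 / (1 + A₂ / x))) x :=
      (hasDerivAt_id x).mul hlogM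
    have hxA : (0:ℝ) < x + A₂ := by linarith
    have hd1 : HasDerivAt (fun z : ℝ => A₂ / (z + A₂))
        ((0 * (x + A₂) - A₂ * 1) / (x + A₂) ^ 2) x :=
      (hasDerivAt_const x A₂).div ((hasDerivAt_id x).add_const A₂) hxA.ne'
    have hnum : HasDerivAt (fun z : ℝ => -c₃ * (Real.log (1 + A₂ / z) - A₂ / (z + A₂)))
        (-c₃ * ((0 * x - A₂ * 1) / x ^ 2 / (1 + A₂ / x)
          - (0 * (x + A₂) - A₂ * 1) / (x + A₂) ^ 2)) x :=
      (hlogM.sub hd1).const_mul (-c₃)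
    have hden : HasDerivAt (fun z : ℝ => (z * Real.log (1 + A₂ / z)) ^ 2)
        (2 * (x * Real.log (1 + A₂ / x)) ^ (2 - 1)
          * (1 * Real.log (1 + A₂ / x) + x * ((0 * x - A₂ * 1) / x ^ 2 / (1 + A₂ / x)))) x :=
      hu.pow 2
    have hden0 : (x * Real.log (1 + A₂ / x)) ^ 2 ≠ 0 := by positivity
    have h := hnum.div hden hden0
    refine h.congr_deriv (Eq.symm ?_)
    rw [div_eq_div_iff (by positivity) (by positivity)]
    field_simp
    ring
  · intro x hx
    have hx0 : (0:ℝ) < x := hx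
    have hM : 0 < Real.log (1 + A₂ / x) := Real.log_pos (by nlinarith [div_pos hA₂ hx0])
    have hxA : (0:ℝ) < x + A₂ := by linarith
    positivity

private lemma term1_strict_aux (c₀ c₁ : ℝ) (hc₁ : c₁ > 0) :
    StrictConvexOn ℝ (Set.Ioi (0:ℝ)) (fun z : ℝ => c₀ + c₁ / z) := by
  apply strictConvexOn_Ioi_of_deriv2_aux (g := fun z => -c₁ / z ^ 2)
    (g2 := fun z => 2 * c₁ / z ^ 3)
  · intro x hx
    have hx0 : (0:ℝ) < x := hx
    have h : HasDerivAt (fun z : ℝ => c₀ + c₁ / z)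
        ((0 * x - c₁ * 1) / x ^ 2) x :=
      ((hasDerivAt_const x c₁).div (hasDerivAt_id x) hx0.ne').const_add c₀
    convert h using 1
    field_simp
    ring
  · intro x hx
    have hx0 : (0:ℝ) < x := hx
    have h : HasDerivAt (fun z : ℝ => -c₁ / z ^ 2)
        ((0 * x ^ 2 - -c₁ * (2 * x ^ (2 - 1))) / (x ^ 2) ^ 2) x :=
      (hasDerivAt_const x (-c₁)).div (hasDerivAt_pow 2 x) (by positivity)
    convert h using 1
    field_simp
    ring
  · intro x hx
    have hx0 : (0:ℝ) < x := hx
    positivity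

theorem lifetime_denominator_strictly_convex
    (c₀ c₁ c₂ c₃ A₁ A₂ γ : ℝ)
    (hc₁ : c₁ > 0) (hc₂ : c₂ > 0) (hc₃ : c₃ > 0)
    (hA₁ : A₁ > 0) (hA₂ : A₂ > 0)
    (hγ₁ : 2 ≤ γ) (hγ₂ : γ ≤ 4) :
    StrictConvexOn ℝ (Set.Ioi (0:ℝ))
      (fun z : ℝ => c₀ + c₁ / z
        + c₂ * (z - 1) / Real.log (1 + A₁ * z ^ (1 - γ / 2))
        + c₃ / (z * Real.log (1 + A₂ / z))) := by
  have h1 := term1_strict_aux c₀ c₁ hc₁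
  have h2 := term2_convex_aux c₂ A₁ (1 - γ / 2) hc₂ hA₁ (by linarith) (by linarith)
  have h3 := term3_convex_aux c₃ A₂ hc₃ hA₂
  exact (h1.add_convexOn h2).add_convexOn h3
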